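/- Let p > 0, let T = ℝ/pℤ be the additive circle of circumference p with its quotient metric and Haar probability measure ν_T, let X₀ be a metric space, and equip X := T × X₀ with the ℓ¹ product metric d((θ,x),(θ',x')) = d_T(θ,θ') + d₀(x,x'). Let μ be a finite Borel measure on X invariant under the translations (θ,x) ↦ (θ+t, x) for all t ∈ T. Let φ : X → ℝ be a bounded positive Borel function, set φ̄(θ,x) := ∫_T φ(θ+t, x) dν_T(t), and let κ ≥ 0 satisfy (1−κ)·φ̄ ≤ φ ≤ (1+κ)·φ̄ pointwise. Then d_L(φ·μ, φ̄·μ) ≤ κ · diam(T). -/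

import Mathlib

open MeasureTheory

/-- The Lévy–Prokhorov-type distance of the paper, computed with an explicit
distance function `d`: `d_L^d(μ, ν) = inf {ε > 0 | ∀ A, ν(A_ε) ≥ μ(A)}`, where
`A_ε = {x | ∃ a ∈ A, d x a < ε}` is the open `ε`-neighborhood of `A` for `d`. -/
noncomputable def levyDistD {X : Type*} [MeasurableSpace X] (d : X → X → ℝ)
    (μ ν : Measure X) : ℝ :=
  sInf {ε : ℝ | 0 < ε ∧ ∀ A : Set X, μ A ≤ ν {x | ∃ a ∈ A, d x a < ε}}

open Set
open scoped ENNReal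


lemma stmt7_intervalIntegrable {ρ : ℝ → ℝ} (hm : Measurable ρ) (h0 : ∀ y, 0 ≤ ρ y)
    {M : ℝ} (hM : ∀ y, ρ y ≤ M) (a b : ℝ) : IntervalIntegrable ρ volume a b := by
  apply IntervalIntegrable.mono_fun' (g := fun _ => M)
  · exact intervalIntegrable_const
  · exact hm.aestronglyMeasurable
  · refine Filter.Eventually.of_forall fun y => ?_
    simpa [Real.norm_eq_abs, abs_of_nonneg (h0 y)] using hM y

lemma stmt7_core_map {p : ℝ} (hp : 0 < p) {ρ : ℝ → ℝ} (hm : Measurable ρ) (h0 : ∀ y, 0 ≤ ρ y)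
    {M : ℝ} (hM : ∀ y, ρ y ≤ M) (htot : ∫ u in (0:ℝ)..p, ρ u = p) :
    Measure.map (fun y => ∫ u in (0:ℝ)..y, ρ u)
      ((volume.restrict (Set.Ioc 0 p)).withDensity fun y => ENNReal.ofReal (ρ y))
      = volume.restrict (Set.Ioc 0 p) := by
  have hII : ∀ a b : ℝ, IntervalIntegrable ρ volume a b := stmt7_intervalIntegrable hm h0 hM
  set F : ℝ → ℝ := fun y => ∫ u in (0:ℝ)..y, ρ u with hF
  have hFcont : Continuous F := intervalIntegral.continuous_primitive hII 0
  have hFmono : Monotone F := by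
    intro a b hab
    have : F b - F a = ∫ u in a..b, ρ u := by
      rw [hF]
      simp only
      rw [← intervalIntegral.integral_add_adjacent_intervals (hII 0 a) (hII a b)]
      ring
    nlinarith [intervalIntegral.integral_nonneg (μ := volume) hab (fun u _ => h0 u), this]
  have hF0 : F 0 = 0 := by simp [hF]
  have hFp : F p = p := htot
  have hFnn : ∀ y, 0 ≤ y → 0 ≤ F y := fun y hy => hF0 ▸ hFmono hy
  -- finiteness of LHS-measure
  haveI : IsFiniteMeasure ((volume.restrict (Set.Ioc 0 p)).withDensity
      fun y => ENNReal.ofReal (ρ y)) := by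
    constructor
    rw [withDensity_apply _ MeasurableSet.univ, Measure.restrict_restrict MeasurableSet.univ]
    calc ∫⁻ y in Set.univ ∩ Set.Ioc 0 p, ENNReal.ofReal (ρ y) ∂volume
        ≤ ∫⁻ _ in Set.univ ∩ Set.Ioc 0 p, ENNReal.ofReal M ∂volume := by
          apply lintegral_mono_ae
          exact Filter.Eventually.of_forall fun y => ENNReal.ofReal_le_ofReal (hM y)
      _ < ⊤ := by
          rw [setLIntegral_const]
          apply ENNReal.mul_lt_top ENNReal.ofReal_lt_top
          simpa using measure_Ioc_lt_top (a := (0:ℝ)) (b := p)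
  refine Measure.ext_of_Iic _ _ (fun z => ?_)
  rw [Measure.map_apply hFcont.measurable measurableSet_Iic,
    withDensity_apply _ (hFcont.measurable measurableSet_Iic),
    Measure.restrict_restrict (hFcont.measurable measurableSet_Iic)]
  rcases lt_or_ge z 0 with hz | hz
  · have he : F ⁻¹' Set.Iic z ∩ Set.Ioc 0 p = ∅ := by
      ext y
      simp only [Set.mem_inter_iff, Set.mem_preimage, Set.mem_Iic, Set.mem_Ioc, Set.mem_empty_iff_false, iff_false]
      rintro ⟨h1, h2, h3⟩
      exact absurd (le_trans (hFnn y h2.le) h1) (not_le.mpr hz)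
    have he2 : Set.Iic z ∩ Set.Ioc 0 p = ∅ := by
      ext y
      simp only [Set.mem_inter_iff, Set.mem_Iic, Set.mem_Ioc, Set.mem_empty_iff_false, iff_false]
      rintro ⟨h1, h2, h3⟩
      linarith
    rw [he, Measure.restrict_apply measurableSet_Iic, he2]
    simp
  · -- z ≥ 0
    set S : Set ℝ := {y ∈ Set.Icc 0 p | F y ≤ z} with hS
    have hSclosed : IsClosed S := isClosed_Icc.inter (isClosed_le hFcont continuous_const)
    have hSne : S.Nonempty := ⟨0, ⟨le_refl 0, hp.le⟩, by rw [hF0]; exact hz⟩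
    have hSbdd : BddAbove S := ⟨p, fun y hy => hy.1.2⟩
    set y₁ : ℝ := sSup S with hy₁
    have hy₁S : y₁ ∈ S := hSclosed.csSup_mem hSne hSbdd
    -- IVT for min z p
    obtain ⟨y₀, hy₀mem, hy₀⟩ : ∃ y₀ ∈ Set.Icc (0:ℝ) p, F y₀ = min z p := by
      have : min z p ∈ Set.Icc (F 0) (F p) := by
        rw [hF0, hFp]
        exact ⟨le_min hz hp.le, min_le_right _ _⟩
      obtain ⟨y₀, h1, h2⟩ := intermediate_value_Icc hp.le (hFcont.continuousOn) this
      exact ⟨y₀, h1, h2⟩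
    have hy₀S : y₀ ∈ S := ⟨hy₀mem, by rw [hy₀]; exact min_le_left _ _⟩
    have hFy₁ : F y₁ = min z p := by
      have h1 : F y₁ ≤ min z p := le_min hy₁S.2 (hFp ▸ hFmono hy₁S.1.2)
      have h2 : min z p ≤ F y₁ := hy₀ ▸ hFmono (le_csSup hSbdd hy₀S)
      linarith
    have hEeq : F ⁻¹' Set.Iic z ∩ Set.Ioc 0 p = Set.Ioc 0 y₁ := by
      ext y
      simp only [Set.mem_inter_iff, Set.mem_preimage, Set.mem_Iic, Set.mem_Ioc]
      constructor
      · rintro ⟨h1, h2, h3⟩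
        exact ⟨h2, le_csSup hSbdd ⟨⟨h2.le, h3⟩, h1⟩⟩
      · rintro ⟨h1, h2⟩
        exact ⟨le_trans (hFmono h2) hy₁S.2, h1, le_trans h2 hy₁S.1.2⟩
    rw [hEeq]
    have hint : ∫⁻ y in Set.Ioc 0 y₁, ENNReal.ofReal (ρ y) = ENNReal.ofReal (F y₁) := by
      rw [← ofReal_integral_eq_lintegral_ofReal (hII 0 y₁).1
        (Filter.Eventually.of_forall fun y => h0 y)]
      congr 1
      rw [hF]
      simp only
      rw [intervalIntegral.integral_of_le hy₁S.1.1]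
    rw [hint, hFy₁, Measure.restrict_apply measurableSet_Iic]
    have : Set.Iic z ∩ Set.Ioc 0 p = Set.Ioc 0 (min z p) := by
      ext y
      simp only [Set.mem_inter_iff, Set.mem_Iic, Set.mem_Ioc]
      constructor
      · rintro ⟨h1, h2, h3⟩; exact ⟨h2, le_min h1 h3⟩
      · rintro ⟨h1, h2⟩; exact ⟨(le_min_iff.mp h2).1, h1, (le_min_iff.mp h2).2⟩
    rw [this, Real.volume_Ioc]
    simp

lemma stmt7_circle_transport {p : ℝ} [hp : Fact (0 < p)] {ρC : AddCircle p → ℝ}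
    (hm : Measurable ρC) (h0 : ∀ θ, 0 ≤ ρC θ) {M : ℝ} (hM : ∀ θ, ρC θ ≤ M)
    (htot : ∫ t, ρC t ∂(AddCircle.haarAddCircle) = 1)
    {s : Set (AddCircle p)} (hs : MeasurableSet s) :
    ∫⁻ θ in (fun θ : AddCircle p =>
        ((↑(∫ u in (0:ℝ)..((AddCircle.equivIoc p 0 θ : ℝ)), ρC ↑u)) : AddCircle p)) ⁻¹' s,
      ENNReal.ofReal (ρC θ) ∂(AddCircle.haarAddCircle) = AddCircle.haarAddCircle s := by
  set ν := (AddCircle.haarAddCircle : Measure (AddCircle p)) with hν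
  set ρ : ℝ → ℝ := fun u => ρC ↑u with hρ
  have hρm : Measurable ρ := hm.comp AddCircle.measurable_mk'
  set F : ℝ → ℝ := fun y => ∫ u in (0:ℝ)..y, ρ u with hFdef
  have hFcont : Continuous F :=
    intervalIntegral.continuous_primitive (stmt7_intervalIntegrable hρm (fun y => h0 _) (fun y => hM _)) 0
  set Φ : AddCircle p → AddCircle p :=
    fun θ => ((↑(F ((AddCircle.equivIoc p 0 θ : ℝ)))) : AddCircle p) with hΦdef
  have hemeas : Measurable fun θ : AddCircle p => ((AddCircle.equivIoc p 0 θ : ℝ)) :=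
    measurable_subtype_coe.comp (AddCircle.measurableEquivIoc p 0).measurable_toFun
  have hΦm : Measurable Φ :=
    AddCircle.measurable_mk'.comp (hFcont.measurable.comp hemeas)
  have htot' : ∫ u in (0:ℝ)..p, ρ u = p := by
    rw [intervalIntegral.integral_of_le hp.out.le]
    have h1 := AddCircle.integral_preimage p 0 ρC
    rw [zero_add] at h1
    rw [hρ]
    simp only
    rw [h1, AddCircle.volume_eq_smul_haarAddCircle, MeasureTheory.integral_smul_measure, htot,
      ENNReal.toReal_ofReal hp.out.le]
    simp
  -- volume version
  have claim1 : ∫⁻ θ in Φ ⁻¹' s, ENNReal.ofReal (ρC θ) ∂(volume) = volume s := by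
    rw [← lintegral_indicator (hΦm hs)]
    have h2 := AddCircle.lintegral_preimage p 0
      ((Φ ⁻¹' s).indicator fun θ => ENNReal.ofReal (ρC θ))
    rw [zero_add] at h2
    rw [← h2]
    have h3 : ∀ y ∈ Set.Ioc (0:ℝ) p,
        (Φ ⁻¹' s).indicator (fun θ => ENNReal.ofReal (ρC θ)) ((y : AddCircle p)) =
        ((fun y : ℝ => ((F y : ℝ) : AddCircle p)) ⁻¹' s).indicator
          (fun y => ENNReal.ofReal (ρ y)) y := by
      intro y hy
      have hy' : y ∈ Set.Ioc (0:ℝ) (0 + p) := by rwa [zero_add]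
      have heq : (AddCircle.equivIoc p 0) ((y : AddCircle p)) = ⟨y, hy'⟩ := by
        rw [Equiv.apply_eq_iff_eq_symm_apply]
        rfl
      have hPhiy : Φ ((y : ℝ) : AddCircle p) = ((F y : ℝ) : AddCircle p) := by
        show ((F ((AddCircle.equivIoc p 0 ((y : ℝ) : AddCircle p) : ℝ)) : ℝ) : AddCircle p) = _
        rw [heq]
      by_cases hc : ((F y : ℝ) : AddCircle p) ∈ s
      · rw [Set.indicator_of_mem (by simpa [Set.mem_preimage, hPhiy] using hc),
          Set.indicator_of_mem (by simpa using hc)]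
      · rw [Set.indicator_of_notMem (by simpa [Set.mem_preimage, hPhiy] using hc),
          Set.indicator_of_notMem (by simpa using hc)]
    rw [setLIntegral_congr_fun measurableSet_Ioc h3]
    have hBm : MeasurableSet ((fun y : ℝ => ((F y : ℝ) : AddCircle p)) ⁻¹' s) :=
      (AddCircle.measurable_mk'.comp hFcont.measurable) hs
    rw [lintegral_indicator hBm]
    have h4 : ∫⁻ y in (fun y : ℝ => ((F y : ℝ) : AddCircle p)) ⁻¹' s,
        ENNReal.ofReal (ρ y) ∂(volume.restrict (Set.Ioc 0 p)) =
        ((volume.restrict (Set.Ioc 0 p)).withDensity fun y => ENNReal.ofReal (ρ y))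
          ((fun y : ℝ => ((F y : ℝ) : AddCircle p)) ⁻¹' s) := by
      rw [withDensity_apply _ hBm]
    rw [h4]
    have h5 : ((fun y : ℝ => ((F y : ℝ) : AddCircle p)) ⁻¹' s) =
        F ⁻¹' (((↑) : ℝ → AddCircle p) ⁻¹' s) := rfl
    rw [h5, ← Measure.map_apply hFcont.measurable (AddCircle.measurable_mk' hs),
      stmt7_core_map hp.out hρm (fun y => h0 _) (fun y => hM _) htot']
    have h6 := (AddCircle.measurePreserving_mk p 0).measure_preimage
      (hs.nullMeasurableSet)
    rwa [zero_add] at h6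
  -- now convert to haar
  have hvol : (volume : Measure (AddCircle p)) = ENNReal.ofReal p • ν :=
    AddCircle.volume_eq_smul_haarAddCircle
  rw [hvol] at claim1
  rw [Measure.restrict_smul, lintegral_smul_measure, Measure.smul_apply, smul_eq_mul] at claim1
  exact (ENNReal.mul_right_inj (by simp [hp.out]) ENNReal.ofReal_ne_top).mp claim1

lemma stmt7_displacement {p κ : ℝ} (hp : 0 < p) (hκ : 0 ≤ κ) {ρ : ℝ → ℝ}
    (hm : Measurable ρ) (hlo : ∀ y, 1 - κ ≤ ρ y) (hhi : ∀ y, ρ y ≤ 1 + κ)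
    (h0 : ∀ y, 0 ≤ ρ y) (htot : ∫ u in (0:ℝ)..p, ρ u = p)
    {y : ℝ} (hy : y ∈ Set.Ioc (0:ℝ) p) :
    |(∫ u in (0:ℝ)..y, ρ u) - y| ≤ κ * (p / 2) := by
  have hII : ∀ a b : ℝ, IntervalIntegrable ρ volume a b :=
    stmt7_intervalIntegrable hm h0 (fun u => hhi u)
  have habs : ∀ u : ℝ, |ρ u - 1| ≤ κ := fun u =>
    abs_le.mpr ⟨by linarith [hlo u], by linarith [hhi u]⟩
  have hIIs : ∀ a b : ℝ, IntervalIntegrable (fun u => ρ u - 1) volume a b := fun a b =>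
    (hII a b).sub intervalIntegrable_const
  have key : ∀ a b : ℝ, a ≤ b → |∫ u in a..b, (ρ u - 1)| ≤ κ * (b - a) := by
    intro a b hab
    calc |∫ u in a..b, (ρ u - 1)| ≤ ∫ u in a..b, |ρ u - 1| :=
          intervalIntegral.abs_integral_le_integral_abs hab
      _ ≤ ∫ _u in a..b, κ := by
          apply intervalIntegral.integral_mono_on hab ((hIIs a b).abs) intervalIntegrable_const
          intro u _
          exact habs u
      _ = κ * (b - a) := by simp [mul_comm]
  have hsub : ∀ a b : ℝ, (∫ u in a..b, (ρ u - 1)) = (∫ u in a..b, ρ u) - (b - a) := by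
    intro a b
    rw [intervalIntegral.integral_sub (hII a b) intervalIntegrable_const]
    simp
  rcases le_or_gt y (p / 2) with hhalf | hhalf
  · have h1 := key 0 y hy.1.le
    rw [hsub 0 y] at h1
    simp only [sub_zero] at h1
    have : κ * y ≤ κ * (p / 2) := mul_le_mul_of_nonneg_left hhalf hκ
    linarith [abs_le.mp h1]
  · have h1 := key y p hy.2
    rw [hsub y p] at h1
    have hadd : (∫ u in (0:ℝ)..y, ρ u) + (∫ u in y..p, ρ u) = p := by
      rw [intervalIntegral.integral_add_adjacent_intervals (hII 0 y) (hII y p)]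
      exact htot
    have h2 : (∫ u in y..p, ρ u) - (p - y) = -((∫ u in (0:ℝ)..y, ρ u) - y) := by linarith
    rw [h2, abs_neg] at h1
    have : κ * (p - y) ≤ κ * (p / 2) := mul_le_mul_of_nonneg_left (by linarith) hκ
    linarith [abs_le.mp h1]

set_option maxHeartbeats 1000000 in
set_option synthInstance.maxHeartbeats 400000 in
/-- Corollary 18.0.8: on `X = T × X₀` (`T = ℝ/pℤ`) with the ℓ¹ product metric
and a `T`-invariant finite Borel measure `μ`, if `φ` is a bounded positive
Borel function whose `T`-average is `φ̄` and `(1−κ)·φ̄ ≤ φ ≤ (1+κ)·φ̄`, then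
`d_L(φ·μ, φ̄·μ) ≤ κ · diam T`. -/
theorem stmt7 {p : ℝ} [hp : Fact (0 < p)] {X₀ : Type*} [MetricSpace X₀]
    [MeasurableSpace X₀] [BorelSpace X₀]
    (μ : Measure (AddCircle p × X₀)) [IsFiniteMeasure μ]
    (hinv : ∀ t : AddCircle p,
      Measure.map (fun q : AddCircle p × X₀ => (t + q.1, q.2)) μ = μ)
    (φ : AddCircle p × X₀ → ℝ) (hmeas : Measurable φ)
    (hbdd : ∃ C : ℝ, ∀ q, φ q ≤ C) (hpos : ∀ q, 0 < φ q)
    {κ : ℝ} (hκ : 0 ≤ κ)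
    (hlow : ∀ q : AddCircle p × X₀,
      (1 - κ) * (∫ t, φ (q.1 + t, q.2) ∂(AddCircle.haarAddCircle)) ≤ φ q)
    (hhigh : ∀ q : AddCircle p × X₀,
      φ q ≤ (1 + κ) * (∫ t, φ (q.1 + t, q.2) ∂(AddCircle.haarAddCircle))) :
    levyDistD (fun a b : AddCircle p × X₀ => dist a.1 b.1 + dist a.2 b.2)
      (μ.withDensity fun q => ENNReal.ofReal (φ q))
      (μ.withDensity fun q =>
        ENNReal.ofReal (∫ t, φ (q.1 + t, q.2) ∂(AddCircle.haarAddCircle)))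
      ≤ κ * Metric.diam (Set.univ : Set (AddCircle p)) := by
  obtain ⟨C, hC⟩ := hbdd
  have hsect : ∀ x : X₀, Measurable fun t : AddCircle p => φ (t, x) :=
    fun x => hmeas.comp (measurable_id.prodMk measurable_const)
  have hintsect : ∀ x, Integrable (fun t => φ (t, x)) AddCircle.haarAddCircle := fun x =>
    (integrable_const C).mono' (hsect x).aestronglyMeasurable
      (Filter.Eventually.of_forall fun t => by
        rw [Real.norm_eq_abs, abs_of_pos (hpos _)]; exact hC _)
  set c : X₀ → ℝ := fun x => ∫ t, φ (t, x) ∂(AddCircle.haarAddCircle) with hcdef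
  have hcpos : ∀ x, 0 < c x := by
    intro x
    apply (integral_pos_iff_support_of_nonneg (fun t => (hpos (t, x)).le) (hintsect x)).mpr
    have hsupp : (Function.support fun t : AddCircle p => φ (t, x)) = Set.univ := by
      ext t; simp [Function.mem_support, (hpos (t, x)).ne']
    rw [hsupp]
    simp
  have hbarc : ∀ q : AddCircle p × X₀,
      (∫ t, φ (q.1 + t, q.2) ∂(AddCircle.haarAddCircle)) = c q.2 := fun q =>
    integral_add_left_eq_self (μ := AddCircle.haarAddCircle) (fun t => φ (t, q.2)) q.1
  have hcm : Measurable c := by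
    have h1 : StronglyMeasurable fun z : X₀ × AddCircle p => φ (z.2, z.1) :=
      (hmeas.comp (measurable_snd.prodMk measurable_fst)).stronglyMeasurable
    exact h1.integral_prod_right'.measurable
  set ρC : AddCircle p × X₀ → ℝ := fun q => φ q / c q.2 with hρdef
  have hρm : Measurable ρC := hmeas.div (hcm.comp measurable_snd)
  have hρ0 : ∀ q, 0 ≤ ρC q := fun q => div_nonneg (hpos q).le (hcpos q.2).le
  have hρhi : ∀ q, ρC q ≤ 1 + κ := fun q => (div_le_iff₀ (hcpos q.2)).mpr (by
      have h := hhigh q; rw [hbarc q] at h; linarith)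
  have hρlo : ∀ q, 1 - κ ≤ ρC q := fun q => (le_div_iff₀ (hcpos q.2)).mpr (by
      have h := hlow q; rw [hbarc q] at h; linarith)
  have hρtot : ∀ x, ∫ t, ρC (t, x) ∂(AddCircle.haarAddCircle) = 1 := by
    intro x
    have h1 : (fun t : AddCircle p => ρC (t, x)) = fun t => φ (t, x) / c x := rfl
    have h2 : (∫ t, φ (t, x) ∂(AddCircle.haarAddCircle)) = c x := rfl
    rw [h1, integral_div, h2, div_self (hcpos x).ne']
  set F : ℝ → X₀ → ℝ := fun y x => ∫ u in (0:ℝ)..y, ρC (↑u, x) with hFdef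
  have hρsm : ∀ x, Measurable fun u : ℝ => ρC ((u : AddCircle p), x) :=
    fun x => hρm.comp (AddCircle.measurable_mk'.prodMk measurable_const)
  have hFcont : ∀ x, Continuous fun y => F y x := fun x =>
    intervalIntegral.continuous_primitive
      (stmt7_intervalIntegrable (hρsm x) (fun u => hρ0 _) (fun u => hρhi _)) 0
  have hFmx : ∀ y : ℝ, Measurable (F y) := by
    intro y
    have hm1 : ∀ a b : ℝ, Measurable fun x => ∫ u in Set.Ioc a b, ρC ((u : AddCircle p), x) := by
      intro a b
      have h1 : StronglyMeasurable fun z : X₀ × ℝ => ρC ((z.2 : AddCircle p), z.1) :=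
        (hρm.comp ((AddCircle.measurable_mk'.comp measurable_snd).prodMk
          measurable_fst)).stronglyMeasurable
      exact (h1.integral_prod_right' (ν := volume.restrict (Set.Ioc a b))).measurable
    have h2 : F y = fun x =>
        (∫ u in Set.Ioc 0 y, ρC ((u : AddCircle p), x)) -
          ∫ u in Set.Ioc y 0, ρC ((u : AddCircle p), x) := rfl
    rw [h2]
    exact (hm1 0 y).sub (hm1 y 0)
  have hFm : Measurable (Function.uncurry F) :=
    measurable_uncurry_of_continuous_of_measurable hFcont hFmx
  set e : AddCircle p → ℝ := fun θ => ((AddCircle.equivIoc p 0 θ : ℝ)) with hedef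
  have hem : Measurable e :=
    measurable_subtype_coe.comp (AddCircle.measurableEquivIoc p 0).measurable_toFun
  set S : AddCircle p × X₀ → AddCircle p × X₀ :=
    fun q => (((F (e q.1) q.2 : ℝ) : AddCircle p), q.2) with hSdef
  have hSm : Measurable S := by
    apply Measurable.prodMk _ measurable_snd
    have h1 : (fun q : AddCircle p × X₀ => ((F (e q.1) q.2 : ℝ) : AddCircle p)) =
        ((↑) : ℝ → AddCircle p) ∘ (Function.uncurry F) ∘ (fun q : AddCircle p × X₀ => (e q.1, q.2)) := rfl
    rw [h1]
    exact AddCircle.measurable_mk'.comp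
      (hFm.comp ((hem.comp measurable_fst).prodMk measurable_snd))
  -- displacement bound
  have hdisp : ∀ q : AddCircle p × X₀,
      dist (((F (e q.1) q.2 : ℝ) : AddCircle p)) q.1 ≤ κ * (p / 2) := by
    intro q
    have hy : e q.1 ∈ Set.Ioc (0:ℝ) p := by
      have h1 := (AddCircle.equivIoc p 0 q.1).2
      exact ⟨h1.1, by linarith [h1.2]⟩
    have htotx : ∫ u in (0:ℝ)..p, ρC ((u : AddCircle p), q.2) = p := by
      rw [intervalIntegral.integral_of_le hp.out.le]
      have h1 := AddCircle.integral_preimage p 0 (fun t => ρC (t, q.2))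
      rw [zero_add] at h1
      rw [h1, AddCircle.volume_eq_smul_haarAddCircle, MeasureTheory.integral_smul_measure,
        hρtot q.2, ENNReal.toReal_ofReal hp.out.le, smul_eq_mul, mul_one]
    have habs := stmt7_displacement hp.out hκ (hρsm q.2) (fun y => hρlo _) (fun y => hρhi _)
      (fun y => hρ0 _) htotx hy
    have hq1 : q.1 = ((e q.1 : ℝ) : AddCircle p) :=
      ((AddCircle.equivIoc p 0).symm_apply_apply q.1).symm
    calc dist (((F (e q.1) q.2 : ℝ) : AddCircle p)) q.1
        = ‖((F (e q.1) q.2 : ℝ) : AddCircle p) - ((e q.1 : ℝ) : AddCircle p)‖ := by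
          rw [dist_eq_norm]; rw [← hq1]
      _ = ‖((F (e q.1) q.2 - e q.1 : ℝ) : AddCircle p)‖ := by rw [AddCircle.coe_sub]
      _ ≤ |F (e q.1) q.2 - e q.1| := by
          simpa using (QuotientAddGroup.norm_mk_le_norm : ‖((F (e q.1) q.2 - e q.1 : ℝ) : ℝ ⧸ AddSubgroup.zmultiples p)‖ ≤ _)
      _ ≤ κ * (p / 2) := habs
  -- averaging over the circle
  have hAVG : ∀ g : AddCircle p × X₀ → ℝ≥0∞, Measurable g →
      ∫⁻ q, g q ∂μ = ∫⁻ q, ∫⁻ t, g (t + q.1, q.2) ∂(AddCircle.haarAddCircle) ∂μ := by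
    intro g hg
    have hmap : Measurable fun z : (AddCircle p × X₀) × AddCircle p =>
        g (z.2 + z.1.1, z.1.2) :=
      hg.comp ((measurable_snd.add (measurable_fst.comp measurable_fst)).prodMk
        (measurable_snd.comp measurable_fst))
    have hswap := lintegral_lintegral_swap (μ := μ) (ν := AddCircle.haarAddCircle)
      (f := fun q t => g (t + q.1, q.2)) hmap.aemeasurable
    rw [hswap]
    have hinner : ∀ t, ∫⁻ q, g (t + q.1, q.2) ∂μ = ∫⁻ q, g q ∂μ := by
      intro t
      conv_rhs => rw [← hinv t]
      rw [lintegral_map hg (show Measurable fun q : AddCircle p × X₀ => (t + q.1, q.2) from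
        (measurable_const.add measurable_fst).prodMk measurable_snd)]
    simp_rw [hinner]
    simp
  -- generic indicator section lemma
  have hset1 : ∀ (B : Set (AddCircle p × X₀)) (f : AddCircle p × X₀ → ℝ≥0∞) (x : X₀)
      (τ : AddCircle p),
      B.indicator f (τ, x) = {τ' | (τ', x) ∈ B}.indicator (fun τ' => f (τ', x)) τ := by
    intro B f x τ
    by_cases hb : (τ, x) ∈ B
    · rw [Set.indicator_of_mem hb, Set.indicator_of_mem (show τ ∈ {τ' | (τ', x) ∈ B} from hb)]
    · rw [Set.indicator_of_notMem hb,
        Set.indicator_of_notMem (show τ ∉ {τ' | (τ', x) ∈ B} from hb)]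
  have hshift : ∀ (h : AddCircle p → ℝ≥0∞) (θ : AddCircle p),
      ∫⁻ t, h (t + θ) ∂(AddCircle.haarAddCircle) = ∫⁻ t, h t ∂(AddCircle.haarAddCircle) := by
    intro h θ
    have h1 : ∀ t : AddCircle p, t + θ = θ + t := fun t => add_comm t θ
    simp_rw [h1]
    exact lintegral_add_left_eq_self h θ
  -- the pushforward identity
  have hmapS : Measure.map S (μ.withDensity fun q => ENNReal.ofReal (φ q)) =
      μ.withDensity fun q => ENNReal.ofReal (c q.2) := by
    have hgm2 : Measurable fun q : AddCircle p × X₀ => ENNReal.ofReal (c q.2) :=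
      (hcm.comp measurable_snd).ennreal_ofReal
    refine Measure.ext fun s hs => ?_
    rw [Measure.map_apply hSm hs, withDensity_apply _ (hSm hs), withDensity_apply _ hs,
      ← lintegral_indicator (hSm hs), ← lintegral_indicator hs,
      hAVG _ ((hmeas.ennreal_ofReal).indicator (hSm hs)),
      hAVG _ (hgm2.indicator hs)]
    refine lintegral_congr fun q => ?_
    obtain ⟨θ, x⟩ := q
    dsimp only
    rw [hshift (fun τ => (S ⁻¹' s).indicator (fun q' => ENNReal.ofReal (φ q')) (τ, x)) θ,
      hshift (fun τ => s.indicator (fun q' => ENNReal.ofReal (c q'.2)) (τ, x)) θ]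
    have hsx : MeasurableSet {τ' : AddCircle p | (τ', x) ∈ s} :=
      measurable_prodMk_right hs
    -- LHS
    have hL : ∫⁻ τ, (S ⁻¹' s).indicator (fun q' => ENNReal.ofReal (φ q')) (τ, x)
          ∂(AddCircle.haarAddCircle) =
        ENNReal.ofReal (c x) * AddCircle.haarAddCircle {τ' : AddCircle p | (τ', x) ∈ s} := by
      have h1 : ∀ τ : AddCircle p,
          (S ⁻¹' s).indicator (fun q' => ENNReal.ofReal (φ q')) (τ, x) =
          ENNReal.ofReal (c x) *
            {τ' : AddCircle p | (τ', x) ∈ S ⁻¹' s}.indicator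
              (fun τ' => ENNReal.ofReal (ρC (τ', x))) τ := by
        intro τ
        rw [hset1]
        by_cases hb : τ ∈ {τ' : AddCircle p | (τ', x) ∈ S ⁻¹' s}
        · rw [Set.indicator_of_mem hb, Set.indicator_of_mem hb, ← ENNReal.ofReal_mul (hcpos x).le]
          congr 1
          show φ (τ, x) = c x * (φ (τ, x) / c x)
          rw [mul_comm]
          exact (div_mul_cancel₀ _ (hcpos x).ne').symm
        · rw [Set.indicator_of_notMem hb, Set.indicator_of_notMem hb, mul_zero]
      simp_rw [h1]
      have hA1 : MeasurableSet {τ' : AddCircle p | (τ', x) ∈ S ⁻¹' s} :=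
        measurable_prodMk_right (hSm hs)
      have hρxm : Measurable fun τ' : AddCircle p => ENNReal.ofReal (ρC (τ', x)) :=
        (hρm.comp (measurable_id.prodMk measurable_const)).ennreal_ofReal
      rw [lintegral_const_mul _ (hρxm.indicator hA1)]
      congr 1
      rw [lintegral_indicator hA1]
      have hpre : {τ' : AddCircle p | (τ', x) ∈ S ⁻¹' s} =
            (fun θ' : AddCircle p =>
              ((↑(∫ u in (0:ℝ)..((AddCircle.equivIoc p 0 θ' : ℝ)), ρC ((u : AddCircle p), x))) :
                AddCircle p)) ⁻¹' {τ' : AddCircle p | (τ', x) ∈ s} := rfl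
      rw [hpre]
      exact stmt7_circle_transport
        (hρm.comp (measurable_id.prodMk measurable_const)) (fun τ => hρ0 _)
        (M := 1 + κ) (fun τ => hρhi _) (hρtot x) hsx
    -- RHS
    have hR : ∫⁻ τ, s.indicator (fun q' => ENNReal.ofReal (c q'.2)) (τ, x)
          ∂(AddCircle.haarAddCircle) =
        ENNReal.ofReal (c x) * AddCircle.haarAddCircle {τ' : AddCircle p | (τ', x) ∈ s} := by
      have h1 : ∀ τ : AddCircle p,
          s.indicator (fun q' => ENNReal.ofReal (c q'.2)) (τ, x) =
          ENNReal.ofReal (c x) *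
            {τ' : AddCircle p | (τ', x) ∈ s}.indicator (1 : AddCircle p → ℝ≥0∞) τ := by
        intro τ
        rw [hset1]
        by_cases hb : τ ∈ {τ' : AddCircle p | (τ', x) ∈ s}
        · rw [Set.indicator_of_mem hb, Set.indicator_of_mem hb, Pi.one_apply, mul_one]
        · rw [Set.indicator_of_notMem hb, Set.indicator_of_notMem hb, mul_zero]
      simp_rw [h1]
      rw [lintegral_const_mul _ (measurable_one.indicator hsx), lintegral_indicator_one hsx]
    rw [hL, hR]
  -- diameter lower bound
  have hdiam2 : p / 2 ≤ Metric.diam (Set.univ : Set (AddCircle p)) := by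
    have h1 : dist ((↑(p/2) : AddCircle p)) 0 = p / 2 := by
      rw [dist_zero_right, AddCircle.norm_half_period_eq, abs_of_pos hp.out]
    calc p / 2 = dist ((↑(p/2) : AddCircle p)) 0 := h1.symm
      _ ≤ Metric.diam (Set.univ : Set (AddCircle p)) :=
          Metric.dist_le_diam_of_mem isCompact_univ.isBounded (Set.mem_univ _) (Set.mem_univ _)
  -- rewrite the statement's second density
  have hdens : (fun q : AddCircle p × X₀ =>
      ENNReal.ofReal (∫ t, φ (q.1 + t, q.2) ∂(AddCircle.haarAddCircle))) =
      fun q => ENNReal.ofReal (c q.2) := funext fun q => by rw [hbarc q]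
  rw [levyDistD, hdens]
  have hbddb : BddBelow {ε : ℝ | 0 < ε ∧ ∀ A : Set (AddCircle p × X₀),
      (μ.withDensity fun q => ENNReal.ofReal (φ q)) A ≤
      (μ.withDensity fun q => ENNReal.ofReal (c q.2))
        {x | ∃ a ∈ A, dist x.1 a.1 + dist x.2 a.2 < ε}} := ⟨0, fun ε hε => hε.1.le⟩
  refine le_of_forall_pos_le_add fun δ hδ => ?_
  refine csInf_le hbddb ?_
  have hεpos : 0 < κ * Metric.diam (Set.univ : Set (AddCircle p)) + δ :=
    add_pos_of_nonneg_of_pos (mul_nonneg hκ Metric.diam_nonneg) hδ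
  refine ⟨hεpos, fun A => ?_⟩
  set ε : ℝ := κ * Metric.diam (Set.univ : Set (AddCircle p)) + δ with hεdef
  have hgt : κ * (p / 2) < ε := by
    have h1 : κ * (p / 2) ≤ κ * Metric.diam (Set.univ : Set (AddCircle p)) :=
      mul_le_mul_of_nonneg_left hdiam2 hκ
    linarith
  have hopen : IsOpen {x : AddCircle p × X₀ | ∃ a ∈ A, dist x.1 a.1 + dist x.2 a.2 < ε} := by
    have h1 : {x : AddCircle p × X₀ | ∃ a ∈ A, dist x.1 a.1 + dist x.2 a.2 < ε} =
        ⋃ a ∈ A, {x : AddCircle p × X₀ | dist x.1 a.1 + dist x.2 a.2 < ε} := by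
      ext x; simp
    rw [h1]
    refine isOpen_biUnion fun a _ => ?_
    exact isOpen_lt ((continuous_fst.dist continuous_const).add
      (continuous_snd.dist continuous_const)) continuous_const
  have hsub : A ⊆ S ⁻¹' {x : AddCircle p × X₀ | ∃ a ∈ A, dist x.1 a.1 + dist x.2 a.2 < ε} := by
    intro q hq
    refine ⟨q, hq, ?_⟩
    have h1 := hdisp q
    have h2 : dist (S q).2 q.2 = 0 := dist_self q.2
    calc dist (S q).1 q.1 + dist (S q).2 q.2 = dist (S q).1 q.1 := by rw [h2, add_zero]
      _ ≤ κ * (p / 2) := h1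
      _ < ε := hgt
  calc (μ.withDensity fun q => ENNReal.ofReal (φ q)) A
      ≤ (μ.withDensity fun q => ENNReal.ofReal (φ q))
          (S ⁻¹' {x : AddCircle p × X₀ | ∃ a ∈ A, dist x.1 a.1 + dist x.2 a.2 < ε}) :=
        measure_mono hsub
    _ = (Measure.map S (μ.withDensity fun q => ENNReal.ofReal (φ q)))
          {x : AddCircle p × X₀ | ∃ a ∈ A, dist x.1 a.1 + dist x.2 a.2 < ε} :=
        (Measure.map_apply hSm hopen.measurableSet).symm
    _ = (μ.withDensity fun q => ENNReal.ofReal (c q.2))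
          {x : AddCircle p × X₀ | ∃ a ∈ A, dist x.1 a.1 + dist x.2 a.2 < ε} := by
        rw [hmapS]
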